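/- Let F ⊂ W^{1,2}_loc(Ω) be an ℝ-linear subspace such that every nonzero g ∈ F is a K-quasiconformal homeomorphism of the domain Ω ⊂ ℂ onto its image. Then dim_ℝ F ≤ 2. -/
import Mathlib


open MeasureTheory

/-- A linear family of `K`-quasiconformal mappings: an `ℝ`-linear subspace
`F ⊆ W^{1,2}_loc(Ω)` all of whose nonzero elements are `K`-quasiconformal
homeomorphisms of the domain `Ω ⊂ ℂ` onto their images (continuous, injective,
a.e. differentiable with `‖Dg‖² ≤ K·J(z,g)`). Then `dim_ℝ F ≤ 2`. -/
theorem stmt11 (Ω : Set ℂ) (hΩo : IsOpen Ω) (hΩc : IsConnected Ω)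
    (K : ℝ) (hK : 1 ≤ K) (F : Submodule ℝ (ℂ → ℂ))
    (hqc : ∀ g ∈ F, g ≠ 0 →
      ContinuousOn g Ω ∧ Set.InjOn g Ω ∧
      (∀ᵐ z ∂(volume.restrict Ω), ∃ D : ℂ →L[ℝ] ℂ,
        HasFDerivWithinAt g D Ω z ∧
        ‖D‖ ^ 2 ≤ K * LinearMap.det (D : ℂ →ₗ[ℝ] ℂ))) :
    Module.rank ℝ F ≤ 2 := by
  -- Pick two distinct points of Ω.
  obtain ⟨z₀, hz₀⟩ := hΩc.nonempty
  obtain ⟨ε, hε, hball⟩ := Metric.isOpen_iff.1 hΩo z₀ hz₀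
  set z₁ : ℂ := z₀ + (ε / 2 : ℝ) with hz₁def
  have hz₁ : z₁ ∈ Ω := by
    apply hball
    simp only [Metric.mem_ball, hz₁def, dist_eq_norm]
    have : z₀ + (ε / 2 : ℝ) - z₀ = ((ε / 2 : ℝ) : ℂ) := by ring
    rw [this, Complex.norm_real, Real.norm_eq_abs, abs_of_pos (by linarith)]
    linarith
  have hne : z₁ ≠ z₀ := by
    simp only [hz₁def, ne_eq, add_eq_left]
    exact_mod_cast ne_of_gt (by linarith : (0:ℝ) < ε / 2)
  -- The evaluation-difference linear map.
  let φ : F →ₗ[ℝ] ℂ :=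
    ((LinearMap.proj z₁ : (ℂ → ℂ) →ₗ[ℝ] ℂ) - (LinearMap.proj z₀)).comp F.subtype
  have hinj : Function.Injective φ := by
    rw [← LinearMap.ker_eq_bot, LinearMap.ker_eq_bot']
    rintro ⟨g, hg⟩ hgz
    have hval : g z₁ - g z₀ = 0 := hgz
    by_contra hne0
    have hg0 : g ≠ 0 := by
      intro h
      exact hne0 (by simpa [Subtype.ext_iff] using h)
    obtain ⟨-, hinjOn, -⟩ := hqc g hg hg0
    exact hne (hinjOn hz₁ hz₀ (sub_eq_zero.1 hval))
  calc Module.rank ℝ F ≤ Module.rank ℝ ℂ := LinearMap.rank_le_of_injective φ hinj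
    _ = 2 := Complex.rank_real_complex
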